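/- Let Z, Z^k : [0, T] → R be càdlàg functions such that sup_{0≤s≤T} (|Z^k(s) - Z(s)| + |Z^k(s-) - Z(s-)|) → 0 as k → ∞. Define θ := inf{s ≥ 0 : min(Z(s), Z(s-)) = 0} ∧ T and θ^k := inf{s ≥ 0 : min(Z^k(s), Z^k(s-)) = 0} ∧ T. If min(Z(s), Z(s-)) > 0 for all s < θ, then liminf_{k→∞} θ^k ≥ θ. -/

import Mathlib

open Filter Topology

open Set
private lemma compact_bdd {s : Set ℝ} (hs : IsCompact s) (f : ℝ → ℝ)
    (h : ∀ x ∈ s, ∃ M, ∀ᶠ u in 𝓝[s] x, |f u| ≤ M) :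
    ∃ M, ∀ u ∈ s, |f u| ≤ M := by
  have key := hs.induction_on (p := fun t => ∃ M, ∀ u ∈ t ∩ s, |f u| ≤ M)
    ⟨0, by simp⟩
    (fun t t' hsub ⟨M, hM⟩ => ⟨M, fun u hu => hM u ⟨hsub hu.1, hu.2⟩⟩)
    (fun t t' ⟨M, hM⟩ ⟨M', hM'⟩ => by
      refine ⟨max M M', ?_⟩
      rintro u ⟨hu | hu, hus⟩
      · exact (hM u ⟨hu, hus⟩).trans (le_max_left _ _)
      · exact (hM' u ⟨hu, hus⟩).trans (le_max_right _ _))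
    (fun x hx => by
      obtain ⟨M, hM⟩ := h x hx
      exact ⟨{u | |f u| ≤ M}, hM, M, fun u hu => hu.1⟩)
  obtain ⟨M, hM⟩ := key
  exact ⟨M, fun u hu => hM u ⟨hu, hu⟩⟩

private lemma compact_lb {s : Set ℝ} (hs : IsCompact s) (f : ℝ → ℝ)
    (h : ∀ x ∈ s, ∃ δ > 0, ∀ᶠ u in 𝓝[s] x, δ ≤ f u) :
    ∃ δ > 0, ∀ u ∈ s, δ ≤ f u := by
  have key := hs.induction_on (p := fun t => ∃ δ > 0, ∀ u ∈ t ∩ s, δ ≤ f u)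
    ⟨1, one_pos, by simp⟩
    (fun t t' hsub ⟨δ, hδ, hM⟩ => ⟨δ, hδ, fun u hu => hM u ⟨hsub hu.1, hu.2⟩⟩)
    (fun t t' ⟨δ, hδ, hM⟩ ⟨δ', hδ', hM'⟩ => by
      refine ⟨min δ δ', lt_min hδ hδ', ?_⟩
      rintro u ⟨hu | hu, hus⟩
      · exact (min_le_left _ _).trans (hM u ⟨hu, hus⟩)
      · exact (min_le_right _ _).trans (hM' u ⟨hu, hus⟩))
    (fun x hx => by
      obtain ⟨δ, hδ, hM⟩ := h x hx
      exact ⟨{u | δ ≤ f u}, hM, δ, hδ, fun u hu => hu.1⟩)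
  obtain ⟨δ, hδ, hM⟩ := key
  exact ⟨δ, hδ, fun u hu => hM u ⟨hu, hu⟩⟩

private lemma cadlag_bdd (T : ℝ) (f g : ℝ → ℝ)
    (hr : ∀ s ∈ Ico (0:ℝ) T, ContinuousWithinAt f (Ici s) s)
    (hg0 : g 0 = f 0)
    (hl : ∀ s ∈ Ioc (0:ℝ) T, Tendsto f (𝓝[<] s) (𝓝 (g s))) :
    ∃ M, ∀ s ∈ Icc (0:ℝ) T, |f s| ≤ M ∧ |g s| ≤ M := by
  have habs : ∀ x (c : ℝ), Tendsto f (𝓝[<] x) (𝓝 c) → Tendsto (fun u => |f u|) (𝓝[<] x) (𝓝 |c|) :=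
    fun x c h => (continuous_abs.tendsto c).comp h
  have hbd : ∃ M, ∀ u ∈ Icc (0:ℝ) T, |f u| ≤ M := by
    apply compact_bdd isCompact_Icc
    intro x hx
    refine ⟨|f x| + |g x| + 1, ?_⟩
    rw [eventually_nhdsWithin_iff, ← nhdsLT_sup_nhdsGE x, eventually_sup]
    constructor
    · rcases eq_or_lt_of_le hx.1 with h0 | h0
      · filter_upwards [self_mem_nhdsWithin] with u hu hmem
        exact absurd hmem.1 (by simp only [mem_Iio] at hu; linarith)
      · have ht := habs x (g x) (hl x ⟨h0, hx.2⟩)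
        filter_upwards [ht.eventually_lt_const
          (by linarith [abs_nonneg (f x)] : |g x| < |f x| + |g x| + 1)] with u hu hmem
        exact hu.le
    · rcases lt_or_eq_of_le hx.2 with hxT | rfl
      · have ht : Tendsto (fun u => |f u|) (𝓝[≥] x) (𝓝 |f x|) :=
          (continuous_abs.tendsto _).comp (hr x ⟨hx.1, hxT⟩)
        filter_upwards [ht.eventually_lt_const
          (by linarith [abs_nonneg (g x)] : |f x| < |f x| + |g x| + 1)] with u hu hmem
        exact hu.le
      · filter_upwards [self_mem_nhdsWithin] with u hu hmem
        have : u = x := le_antisymm hmem.2 hu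
        rw [this]
        linarith [abs_nonneg (g x)]
  obtain ⟨M, hM⟩ := hbd
  refine ⟨M, fun s hs => ⟨hM s hs, ?_⟩⟩
  rcases eq_or_lt_of_le hs.1 with h0 | h0
  · rw [← h0, hg0, h0]; exact hM s hs
  · refine le_of_tendsto (habs s (g s) (hl s ⟨h0, hs.2⟩)) ?_
    filter_upwards [Ioo_mem_nhdsLT_of_mem (⟨h0, le_refl s⟩ : s ∈ Ioc 0 s)] with u hu
    exact hM u ⟨hu.1.le, hu.2.le.trans hs.2⟩

private lemma cadlag_pos (T a : ℝ) (haT : a < T) (f g : ℝ → ℝ)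
    (hr : ∀ s ∈ Ico (0:ℝ) T, ContinuousWithinAt f (Ici s) s)
    (hg0 : g 0 = f 0)
    (hl : ∀ s ∈ Ioc (0:ℝ) T, Tendsto f (𝓝[<] s) (𝓝 (g s)))
    (hpos : ∀ s ∈ Icc (0:ℝ) a, 0 < min (f s) (g s)) :
    ∃ δ > 0, ∀ s ∈ Icc (0:ℝ) a, δ ≤ f s ∧ δ ≤ g s := by
  have hlb : ∃ δ > 0, ∀ u ∈ Icc (0:ℝ) a, δ ≤ f u := by
    apply compact_lb isCompact_Icc
    intro x hx
    have hfx : 0 < f x := lt_of_lt_of_le (hpos x hx) (min_le_left _ _)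
    have hgx : 0 < g x := lt_of_lt_of_le (hpos x hx) (min_le_right _ _)
    refine ⟨min (f x) (g x) / 2, by positivity, ?_⟩
    rw [eventually_nhdsWithin_iff, ← nhdsLT_sup_nhdsGE x, eventually_sup]
    constructor
    · rcases eq_or_lt_of_le hx.1 with h0 | h0
      · filter_upwards [self_mem_nhdsWithin] with u hu hmem
        exact absurd hmem.1 (by simp only [mem_Iio] at hu; linarith)
      · have ht := hl x ⟨h0, (hx.2.trans_lt haT).le⟩
        filter_upwards [ht.eventually_const_lt
          (by have := min_le_right (f x) (g x); linarith [lt_min hfx hgx] :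
            min (f x) (g x) / 2 < g x)] with u hu hmem
        exact hu.le
    · have ht := hr x ⟨hx.1, hx.2.trans_lt haT⟩
      filter_upwards [ht.eventually_const_lt
        (by have := min_le_left (f x) (g x); linarith [lt_min hfx hgx] :
          min (f x) (g x) / 2 < f x)] with u hu hmem
      exact hu.le
  obtain ⟨δ, hδ, hM⟩ := hlb
  refine ⟨δ, hδ, fun s hs => ⟨hM s hs, ?_⟩⟩
  rcases eq_or_lt_of_le hs.1 with h0 | h0
  · rw [← h0, hg0, h0]; exact hM s hs
  · refine ge_of_tendsto (hl s ⟨h0, (hs.2.trans_lt haT).le⟩) ?_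
    filter_upwards [Ioo_mem_nhdsLT_of_mem (⟨h0, le_refl s⟩ : s ∈ Ioc 0 s)] with u hu
    exact hM u ⟨hu.1.le, hu.2.le.trans hs.2⟩

/-- Stability of first hitting times under uniform perturbations. Let `Z, Zk k` be càdlàg
functions on `[0,T]` with left-limit functions `L, Lk k` (with `L 0 = Z 0`, etc.) such that
`sup_{0≤s≤T} (|Zk k s - Z s| + |Lk k s - L s|) → 0`. Define
`θ := inf{s ∈ [0,T] : min (Z s) (L s) = 0} ∧ T` and similarly `θk`. If
`min (Z s) (L s) > 0` for all `s < θ` (with `s ≥ 0`), then `liminf θk ≥ θ`. -/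
theorem liminf_hitting_times_ge
    (T : ℝ) (hT : 0 < T)
    (Z L : ℝ → ℝ) (Zk Lk : ℕ → ℝ → ℝ)
    (hrightZ : ∀ s ∈ Set.Ico (0 : ℝ) T, ContinuousWithinAt Z (Set.Ici s) s)
    (hL0 : L 0 = Z 0)
    (hleftZ : ∀ s ∈ Set.Ioc (0 : ℝ) T, Tendsto Z (nhdsWithin s (Set.Iio s)) (nhds (L s)))
    (hrightZk : ∀ k, ∀ s ∈ Set.Ico (0 : ℝ) T, ContinuousWithinAt (Zk k) (Set.Ici s) s)
    (hLk0 : ∀ k, Lk k 0 = Zk k 0)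
    (hleftZk : ∀ k, ∀ s ∈ Set.Ioc (0 : ℝ) T,
      Tendsto (Zk k) (nhdsWithin s (Set.Iio s)) (nhds (Lk k s)))
    (hunif : Tendsto
      (fun k => ⨆ s : Set.Icc (0 : ℝ) T,
        (|Zk k s - Z s| + |Lk k s - L s|)) atTop (nhds 0))
    (θ : ℝ) (θk : ℕ → ℝ)
    (hθ : θ = sInf ({s ∈ Set.Icc (0 : ℝ) T | min (Z s) (L s) = 0} ∪ {T}))
    (hθk : ∀ k, θk k = sInf ({s ∈ Set.Icc (0 : ℝ) T | min (Zk k s) (Lk k s) = 0} ∪ {T}))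
    (hpos : ∀ s : ℝ, 0 ≤ s → s < θ → 0 < min (Z s) (L s)) :
    θ ≤ atTop.liminf θk := by
    -- basic bounds on θ and θk
  have hTmem : ∀ (A : Set ℝ), T ∈ A ∪ {T} := fun A => Or.inr rfl
  have hbdd0 : ∀ (A : Set ℝ), A ⊆ Set.Icc 0 T → BddBelow (A ∪ {T}) := by
    intro A hA
    refine ⟨0, ?_⟩
    rintro b (hb | rfl)
    · exact (hA hb).1
    · exact hT.le
  have hθT : θ ≤ T := by
    rw [hθ]
    exact csInf_le (hbdd0 _ (fun s hs => hs.1)) (hTmem _)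
  have hθkT : ∀ k, θk k ≤ T := by
    intro k
    rw [hθk]
    exact csInf_le (hbdd0 _ (fun s hs => hs.1)) (hTmem _)
  have hθk0 : ∀ k, 0 ≤ θk k := by
    intro k
    rw [hθk]
    apply le_csInf ⟨T, hTmem _⟩
    rintro b (hb | rfl)
    · exact hb.1.1
    · exact hT.le
  have hcobdd : IsCoboundedUnder (· ≥ ·) atTop θk :=
    (isBoundedUnder_of ⟨T, hθkT⟩).isCoboundedUnder_ge
  -- boundedness for le_ciSup
  obtain ⟨M1, hM1⟩ := cadlag_bdd T Z L hrightZ hL0 hleftZ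
  have hbdd : ∀ k, BddAbove (Set.range fun s : Set.Icc (0:ℝ) T =>
      |Zk k s - Z s| + |Lk k s - L s|) := by
    intro k
    obtain ⟨Mk, hMk⟩ := cadlag_bdd T (Zk k) (Lk k) (hrightZk k) (hLk0 k) (hleftZk k)
    refine ⟨2 * (M1 + Mk), ?_⟩
    rintro x ⟨s, rfl⟩
    have h1 := hM1 s s.2
    have h2 := hMk s s.2
    have := abs_sub (Zk k s) (Z s)
    have := abs_sub (Lk k s) (L s)
    calc |Zk k s - Z s| + |Lk k s - L s|
        ≤ (|Zk k s| + |Z s|) + (|Lk k s| + |L s|) :=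
          add_le_add (abs_sub _ _) (abs_sub _ _)
      _ ≤ 2 * (M1 + Mk) := by linarith [h1.1, h1.2, h2.1, h2.2]
  -- main estimate
  refine le_of_forall_lt_imp_le_of_dense ?_
  intro c hc
  rcases le_or_gt c 0 with hc0 | hc0
  · refine le_liminf_of_le hcobdd ?_
    exact Eventually.of_forall fun k => hc0.trans (hθk0 k)
  · have hcT : c < T := lt_of_lt_of_le hc hθT
    obtain ⟨δ, hδ, hδlb⟩ := cadlag_pos T c hcT Z L hrightZ hL0 hleftZ
      (fun s hs => hpos s hs.1 (lt_of_le_of_lt hs.2 hc))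
    refine le_liminf_of_le hcobdd ?_
    filter_upwards [hunif.eventually_lt_const (half_pos hδ)] with k hk
    rw [hθk]
    apply le_csInf ⟨T, hTmem _⟩
    rintro b (⟨hbIcc, hbmin⟩ | rfl)
    · by_contra hbc
      push_neg at hbc
      have hb : b ∈ Set.Icc (0:ℝ) c := ⟨hbIcc.1, hbc.le⟩
      have hsup : |Zk k b - Z b| + |Lk k b - L b| < δ / 2 :=
        lt_of_le_of_lt (le_ciSup (hbdd k) (⟨b, hbIcc⟩ : Set.Icc (0:ℝ) T)) hk
      have h1 : δ ≤ Z b := (hδlb b hb).1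
      have h2 : δ ≤ L b := (hδlb b hb).2
      have hZ : 0 < Zk k b := by
        have := abs_sub_abs_le_abs_sub (Zk k b) (Z b)
        have h3 : |Zk k b - Z b| < δ / 2 := by
          have := abs_nonneg (Lk k b - L b); linarith
        have := abs_lt.mp h3
        linarith
      have hL : 0 < Lk k b := by
        have h3 : |Lk k b - L b| < δ / 2 := by
          have := abs_nonneg (Zk k b - Z b); linarith
        have := abs_lt.mp h3
        linarith
      have : (0:ℝ) < min (Zk k b) (Lk k b) := lt_min hZ hL
      rw [hbmin] at this
      exact lt_irrefl _ this
    · exact hc.le.trans hθT
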